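/- Suppose the OSC holds and the nonnegative matrix B(q,γ,l) is irreducible. Let q ∈ ℝ, let β(q) be the unique real number with ρ(A(q,β(q))) = 1 and let γ(q) be the unique real number with ρ(B(q,γ(q),l)) = 1. Then γ(q) < β(q). -/

import Mathlib

open MeasureTheory Metric Set Filter Topology Asymptotics

noncomputable section

/-- Euclidean space `ℝ^m`. -/
abbrev Euc (m : ℕ) : Type := EuclideanSpace ℝ (Fin m)

/-- The topological support of a measure. -/
def mSupport {X : Type} [TopologicalSpace X] [MeasurableSpace X]
    (μ : Measure X) : Set X :=
  {x | ∀ U : Set X, IsOpen U → x ∈ U → 0 < μ U}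

/-- The probability weight of a finite path (product of its edge weights). -/
def pathProb {E : Type} (w : E → ℝ) (p : List E) : ℝ := (p.map w).prod

/-- `f` is a subpath of `g`. -/
def IsSubpath {E : Type} (f g : List E) : Prop := ∃ s t : List E, g = s ++ f ++ t

/-- The distance between two sets. -/
def setDist {X : Type} [PseudoMetricSpace X] (A B : Set X) : ℝ :=
  sInf (Set.image2 dist A B)

/-- The `q`-th packing moment `M_u^q(A,r)` of a measure `μ` on `A` at scale `r`:
the supremum of `∑_{x∈D} μ(B̄(x,r))^q` over `r`-separated finite subsets `D ⊆ A`. -/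
def packMoment {m : ℕ} (μ : Measure (Euc m)) (q : ℝ) (A : Set (Euc m)) (r : ℝ) : ℝ :=
  sSup {s : ℝ | ∃ D : Finset (Euc m), ↑D ⊆ A ∧
    (∀ x ∈ D, ∀ y ∈ D, x ≠ y → 2 * r < dist x y) ∧
    s = ∑ x ∈ D, (μ (Metric.closedBall x r)).toReal ^ q}

/-- The spectral radius of a real square matrix (via its complex spectrum). -/
def specRad {n : Type} [Fintype n] [DecidableEq n] (M : Matrix n n ℝ) : ENNReal :=
  spectralRadius ℂ (M.map (algebraMap ℝ ℂ))

/-- A matrix is irreducible if some power has a positive `ij` entry, for every `i j`. -/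
def MatIrreducible {n : Type} [Fintype n] [DecidableEq n] (M : Matrix n n ℝ) : Prop :=
  ∀ i j : n, ∃ k : ℕ, 0 < (M ^ k) i j

/-- A self-similar directed-graph IFS on `ℝ^m`: a finite strongly connected directed
multigraph with at least two edges out of each vertex, each edge carrying a contracting
similarity of `ℝ^m`. -/
structure GIFS (m : ℕ) (V E : Type) [Fintype V] [Fintype E] where
  src : E → V
  dst : E → V
  ratio : E → ℝ
  ratio_pos : ∀ e, 0 < ratio e
  ratio_lt_one : ∀ e, ratio e < 1
  map : E → Euc m → Euc m
  map_similarity : ∀ e x y, dist (map e x) (map e y) = ratio e * dist x y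
  two_edges : ∀ u : V, ∃ e f : E, e ≠ f ∧ src e = u ∧ src f = u
  strongly_connected : ∀ u v : V, ∃ p : List E, p ≠ [] ∧
    p.Chain' (fun a b => dst a = src b) ∧ p.head?.map src = some u ∧
    p.getLast?.map dst = some v

namespace GIFS

variable {m : ℕ} {V E : Type} [Fintype V] [Fintype E] (G : GIFS m V E)

/-- `p` is a directed path (consecutive edges match up). -/
def IsPath (p : List E) : Prop := p.Chain' (fun a b => G.dst a = G.src b)

/-- `p` is a nonempty directed path from `u` to `v`. -/
def IsPathFrom (u v : V) (p : List E) : Prop :=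
  p ≠ [] ∧ G.IsPath p ∧ p.head?.map G.src = some u ∧ p.getLast?.map G.dst = some v

/-- The contraction `S_{e₁} ∘ ⋯ ∘ S_{e_k}` along a path. -/
def pathMap (p : List E) : Euc m → Euc m := p.foldr (fun e f => G.map e ∘ f) id

/-- The contraction ratio along a path. -/
def pathRatio (p : List E) : ℝ := (p.map G.ratio).prod

/-- The terminal vertex of a path (with default `u` for the empty path). -/
def pathDst (u : V) (p : List E) : V := (p.getLast?.map G.dst).getD u

/-- `(F u)_{u ∈ V}` is the attractor: the unique list of nonempty compact sets with
`F u = ⋃_{e ∈ E_u¹} S_e(F_{t(e)})`. -/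
def IsAttractor (F : V → Set (Euc m)) : Prop :=
  (∀ u, (F u).Nonempty) ∧ (∀ u, IsCompact (F u)) ∧
  (∀ u, F u = ⋃ e ∈ {e : E | G.src e = u}, G.map e '' F (G.dst e))

/-- Probability weights on the edges: each in `(0,1)`, summing to `1` at each vertex. -/
def IsProbWeights (w : E → ℝ) : Prop :=
  (∀ e, w e ∈ Set.Ioo (0 : ℝ) 1) ∧
  (∀ u : V, ∑ e : E, Set.indicator {e : E | G.src e = u} w e = 1)

/-- `(μ u)_{u ∈ V}` are the self-similar measures: Borel probability measures with
`μ_u(A) = ∑_{e ∈ E_u¹} p_e μ_{t(e)}(S_e⁻¹(A))` and `supp μ_u = F u`. -/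
def IsSelfSimilarMeasures (w : E → ℝ) (F : V → Set (Euc m)) (μ : V → Measure (Euc m)) : Prop :=
  (∀ u, IsProbabilityMeasure (μ u)) ∧
  (∀ u (A : Set (Euc m)), MeasurableSet A →
    μ u A = ∑ e : E, Set.indicator {e : E | G.src e = u}
      (fun e => ENNReal.ofReal (w e) * μ (G.dst e) (G.map e ⁻¹' A)) e) ∧
  (∀ u, mSupport (μ u) = F u)

/-- The strong separation condition. -/
def SSC (F : V → Set (Euc m)) : Prop :=
  ∀ u : V, ∀ e f : E, G.src e = u → G.src f = u → e ≠ f →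
    (G.map e '' F (G.dst e)) ∩ (G.map f '' F (G.dst f)) = ∅

/-- The open set condition with open sets `U`. -/
def OSCWith (U : V → Set (Euc m)) : Prop :=
  (∀ u, (U u).Nonempty ∧ IsOpen (U u) ∧ Bornology.IsBounded (U u)) ∧
  (∀ e : E, G.map e '' U (G.dst e) ⊆ U (G.src e)) ∧
  (∀ u : V, ∀ e f : E, G.src e = u → G.src f = u → e ≠ f →
    (G.map e '' U (G.dst e)) ∩ (G.map f '' U (G.dst f)) = ∅)

/-- The open set condition. -/
def OSC : Prop := ∃ U : V → Set (Euc m), G.OSCWith U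

variable [DecidableEq V]

/-- The matrix `A(q,β)` with `uv` entry `∑_{e ∈ E¹_{uv}} p_e^q r_e^β`. -/
def matA (w : E → ℝ) (q β : ℝ) : Matrix V V ℝ :=
  Matrix.of fun u v => ∑ e : E,
    Set.indicator {e : E | G.src e = u ∧ G.dst e = v}
      (fun e => w e ^ q * G.ratio e ^ β) e

/-- The matrix `B(q,γ,l)` with `uv` entry `∑_{e ∈ E^l_{uv}, e ≠ l_u} p_e^q r_e^γ`. -/
def matB (w : E → ℝ) (q γ : ℝ) (l : ℕ) (lu : V → List E) : Matrix V V ℝ :=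
  Matrix.of fun u v => ∑ p : List.Vector E l,
    Set.indicator {p : List.Vector E l | G.IsPathFrom u v p.toList ∧ p.toList ≠ lu u}
      (fun p => pathProb w p.toList ^ q * G.pathRatio p.toList ^ γ) p

/-- The matrix of measures `P` with `uv` entry `∑_{e ∈ E¹_{uv}} p_e^q r_e^{β} δ_{ln(1/r_e)}`. -/
def matP (w : E → ℝ) (q β : ℝ) : V → V → Measure ℝ :=
  fun u v => ∑ e : E,
    (Set.indicator {e : E | G.src e = u ∧ G.dst e = v}
      (fun e => ENNReal.ofReal (w e ^ q * G.ratio e ^ β)) e) •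
      Measure.dirac (Real.log ((G.ratio e)⁻¹))

end GIFS

/-- `P` is a lattice matrix of measures with span `lam`. -/
def IsLatticeMatrix {V : Type} (P : V → V → MeasureTheory.Measure ℝ) (lam : ℝ) : Prop :=
  0 < lam ∧
  ∃ (L : V → V → ℝ) (b : V → V → ℝ),
    (∀ u v : V, 0 < L u v) ∧
    -- (a) each diagonal support generates the group `L u u • ℤ`
    (∀ u : V, AddSubgroup.closure (mSupport (P u u)) = AddSubgroup.zmultiples (L u u)) ∧
    -- (b) off-diagonal supports lie in `b u v + L u v • ℤ`, with `L u v` maximal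
    (∀ u v : V, u ≠ v →
      (mSupport (P u v) ⊆ {x : ℝ | ∃ n : ℤ, x = b u v + n * L u v}) ∧
      (∀ L' : ℝ, 0 < L' →
        (∃ b' : ℝ, mSupport (P u v) ⊆ {x : ℝ | ∃ n : ℤ, x = b' + n * L'}) → L' ≤ L u v)) ∧
    -- (c) the numbers `L u v` generate the group `lam • ℤ`
    (AddSubgroup.closure {x : ℝ | ∃ u v : V, x = L u v} = AddSubgroup.zmultiples lam) ∧
    -- (d) `supp P_uv + supp P_vw − supp P_uw ⊆ lam • ℤ`
    (∀ u v z : V, ∀ a ∈ mSupport (P u v), ∀ a' ∈ mSupport (P v z), ∀ a'' ∈ mSupport (P u z),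
      ∃ n : ℤ, a + a' - a'' = n * lam)


/- ------------------------------------------------------------------
Auxiliary Perron–Frobenius theory for the proof of Lemma 3.7.
------------------------------------------------------------------ -/
set_option linter.unusedSectionVars false
set_option linter.unusedVariables false
set_option maxHeartbeats 1000000

namespace L37
open Matrix Filter
open scoped ENNReal NNReal Topology

attribute [local instance] Matrix.linftyOpNormedRing Matrix.linftyOpNormedAlgebra

variable {V : Type} [Fintype V] [DecidableEq V] [Nonempty V]

open Matrix Filter

attribute [local instance] Matrix.linftyOpNormedRing Matrix.linftyOpNormedAlgebra

variable {V : Type} [Fintype V] [DecidableEq V] [Nonempty V]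

lemma exists_eigvec {M : Matrix V V ℂ} {lam : ℂ} (h : lam ∈ spectrum ℂ M) :
    ∃ v : V → ℂ, v ≠ 0 ∧ M *ᵥ v = lam • v := by
  rw [spectrum.mem_iff] at h
  rw [Matrix.isUnit_iff_isUnit_det, isUnit_iff_ne_zero, not_not,
    ← Matrix.exists_mulVec_eq_zero_iff] at h
  obtain ⟨v, hv, hv2⟩ := h
  refine ⟨v, hv, ?_⟩
  have : (algebraMap ℂ (Matrix V V ℂ)) lam = lam • 1 := by
    simp [Algebra.algebraMap_eq_smul_one]
  rw [this, Matrix.sub_mulVec, Matrix.smul_mulVec, Matrix.one_mulVec, sub_eq_zero] at hv2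
  exact hv2.symm

lemma exists_abs_eigvec {M : Matrix V V ℝ} (hM : ∀ i j, 0 ≤ M i j) {lam : ℂ}
    (h : lam ∈ spectrum ℂ (M.map (algebraMap ℝ ℂ))) :
    ∃ y : V → ℝ, (∀ i, 0 ≤ y i) ∧ (∃ i, 0 < y i) ∧
      ∀ i, ‖lam‖ * y i ≤ ∑ j, M i j * y j := by
  obtain ⟨v, hv, hv2⟩ := exists_eigvec h
  refine ⟨fun i => ‖v i‖, fun i => norm_nonneg _, ?_, ?_⟩
  · obtain ⟨i, hi⟩ := Function.ne_iff.1 hv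
    exact ⟨i, norm_pos_iff.2 hi⟩
  · intro i
    have hvi : ((M.map (algebraMap ℝ ℂ)) *ᵥ v) i = lam * v i := by rw [hv2]; rfl
    have : ((M.map (algebraMap ℝ ℂ)) *ᵥ v) i = ∑ j, ((M i j : ℂ)) * v j := by
      simp [Matrix.mulVec, dotProduct, Matrix.map_apply]
    calc ‖lam‖ * ‖v i‖ = ‖lam * v i‖ := (norm_mul _ _).symm
      _ = ‖∑ j, ((M i j : ℂ)) * v j‖ := by rw [← hvi, this]
      _ ≤ ∑ j, ‖((M i j : ℂ)) * v j‖ := norm_sum_le _ _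
      _ = ∑ j, M i j * ‖v j‖ := by
          refine Finset.sum_congr rfl fun j _ => ?_
          rw [norm_mul, Complex.norm_real, Real.norm_eq_abs, abs_of_nonneg (hM i j)]

lemma specRad_le_of_forall (M : Matrix V V ℝ) {r : ℝ} (hr : 0 ≤ r)
    (h : ∀ lam ∈ spectrum ℂ (M.map (algebraMap ℝ ℂ)), ‖lam‖ ≤ r) :
    spectralRadius ℂ (M.map (algebraMap ℝ ℂ)) ≤ ENNReal.ofReal r := by
  rw [spectralRadius]
  refine iSup₂_le fun k hk => ?_
  rw [ENNReal.ofReal, ENNReal.coe_le_coe, Real.le_toNNReal_iff_coe_le hr, coe_nnnorm]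
  exact h k hk

lemma mulVec_mono {M : Matrix V V ℝ} (hM : ∀ i j, 0 ≤ M i j) {x y : V → ℝ}
    (h : ∀ i, x i ≤ y i) (i : V) : (M *ᵥ x) i ≤ (M *ᵥ y) i := by
  simp only [Matrix.mulVec, dotProduct]
  exact Finset.sum_le_sum fun j _ => mul_le_mul_of_nonneg_left (h j) (hM i j)

lemma pow_nonneg' {M : Matrix V V ℝ} (hM : ∀ i j, 0 ≤ M i j) (n : ℕ) :
    ∀ i j, 0 ≤ (M ^ n) i j := by
  induction n with
  | zero => intro i j; by_cases h : i = j <;> simp [Matrix.one_apply, h]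
  | succ n ih =>
    intro i j
    rw [pow_succ, Matrix.mul_apply]
    exact Finset.sum_nonneg fun k _ => mul_nonneg (ih i k) (hM k j)

lemma pow_entrywise_le {M N : Matrix V V ℝ} (hM : ∀ i j, 0 ≤ M i j)
    (hMN : ∀ i j, M i j ≤ N i j) (n : ℕ) : ∀ i j, (M ^ n) i j ≤ (N ^ n) i j := by
  have hN : ∀ i j, 0 ≤ N i j := fun i j => (hM i j).trans (hMN i j)
  induction n with
  | zero => intro i j; simp
  | succ n ih =>
    intro i j
    rw [pow_succ, pow_succ, Matrix.mul_apply, Matrix.mul_apply]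
    refine Finset.sum_le_sum fun k _ => ?_
    exact mul_le_mul (ih i k) (hMN k j) (hM k j) (pow_nonneg' hN n i k)

lemma subinv_pow {M : Matrix V V ℝ} (hM : ∀ i j, 0 ≤ M i j) {x : V → ℝ} {c : ℝ}
    (hc : 0 ≤ c) (h : ∀ i, c * x i ≤ (M *ᵥ x) i) :
    ∀ n i, c ^ n * x i ≤ ((M ^ n) *ᵥ x) i := by
  intro n
  induction n with
  | zero => intro i; simp [Matrix.one_mulVec]
  | succ n ih =>
    intro i
    have e1 : (M ^ (n+1)) *ᵥ x = (M ^ n) *ᵥ (M *ᵥ x) := by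
      rw [pow_succ, ← Matrix.mulVec_mulVec]
    rw [e1]
    have h2 : ((M ^ n) *ᵥ (c • x)) i ≤ ((M ^ n) *ᵥ (M *ᵥ x)) i :=
      mulVec_mono (pow_nonneg' hM n) (fun j => h j) i
    have h3 : ((M ^ n) *ᵥ (c • x)) i = c * ((M ^ n) *ᵥ x) i := by
      rw [Matrix.mulVec_smul]; rfl
    calc c ^ (n+1) * x i = c * (c ^ n * x i) := by ring
      _ ≤ c * ((M ^ n) *ᵥ x) i := mul_le_mul_of_nonneg_left (ih i) hc
      _ = ((M ^ n) *ᵥ (c • x)) i := h3.symm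
      _ ≤ _ := h2





lemma entry_norm_le (N : Matrix V V ℂ) (i j : V) : ‖N i j‖ ≤ ‖N‖ := by
  have h1 : ‖N i j‖₊ ≤ ‖N‖₊ := by
    rw [Matrix.linfty_opNNNorm_def]
    refine le_trans ?_ (Finset.le_sup (Finset.mem_univ i))
    exact Finset.single_le_sum (f := fun j => ‖N i j‖₊) (fun k _ => by positivity) (Finset.mem_univ j)
  exact_mod_cast h1

lemma pow_entry_bound {M : Matrix V V ℝ}
    (h : spectralRadius ℂ (M.map (algebraMap ℝ ℂ)) ≤ 1) {δ : ℝ} (hδ : 0 < δ) :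
    ∃ K : ℝ, 1 ≤ K ∧ ∀ n i j, |(M ^ n) i j| ≤ K * (1 + δ) ^ n := by
  set Mc := M.map (algebraMap ℝ ℂ) with hMc
  have T := spectrum.pow_nnnorm_pow_one_div_tendsto_nhds_spectralRadius Mc
  have hlt : spectralRadius ℂ Mc < ENNReal.ofReal (1 + δ) := by
    refine lt_of_le_of_lt h ?_
    rw [← ENNReal.ofReal_one]
    exact (ENNReal.ofReal_lt_ofReal_iff_of_nonneg zero_le_one).2 (by linarith)
  have hev : ∀ᶠ n : ℕ in atTop, (‖Mc ^ n‖₊ : ℝ≥0∞) ^ (1 / (n:ℝ)) < ENNReal.ofReal (1 + δ) :=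
    T.eventually_lt_const hlt
  obtain ⟨N₀, hN₀⟩ := (hev.and (eventually_ge_atTop 1)).exists_forall_of_atTop
  -- entry bound vs norm
  have hentry : ∀ n i j, |(M ^ n) i j| ≤ ‖Mc ^ n‖ := by
    intro n i j
    have e : (Mc ^ n) i j = ((M ^ n) i j : ℂ) := by
      rw [hMc, ← RingHom.mapMatrix_apply, ← map_pow, RingHom.mapMatrix_apply, Matrix.map_apply]
      simp
    have := entry_norm_le (Mc ^ n) i j
    rwa [e, Complex.norm_real, Real.norm_eq_abs] at this
  have hbig : ∀ n, N₀ ≤ n → ‖Mc ^ n‖ ≤ (1 + δ) ^ n := by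
    intro n hn
    obtain ⟨h1, h2⟩ := hN₀ n hn
    have hne : (n : ℝ) ≠ 0 := Nat.cast_ne_zero.2 (by omega)
    have h3 : (‖Mc ^ n‖₊ : ℝ≥0∞) ≤ (ENNReal.ofReal (1 + δ)) ^ (n : ℝ) := by
      have := ENNReal.rpow_le_rpow h1.le (le_of_lt (by positivity : (0:ℝ) < n))
      rwa [← ENNReal.rpow_mul, one_div_mul_cancel hne, ENNReal.rpow_one] at this
    rw [ENNReal.ofReal_rpow_of_pos (by linarith)] at h3
    rw [ENNReal.ofReal, ENNReal.coe_le_coe,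
      Real.le_toNNReal_iff_coe_le (Real.rpow_nonneg (by linarith) _), coe_nnnorm] at h3
    rwa [Real.rpow_natCast] at h3
  refine ⟨1 + ∑ n ∈ Finset.range N₀, ‖Mc ^ n‖, le_add_of_nonneg_right
    (Finset.sum_nonneg fun _ _ => norm_nonneg _), ?_⟩
  set K := 1 + ∑ n ∈ Finset.range N₀, ‖Mc ^ n‖ with hK
  have hK1 : 1 ≤ K := le_add_of_nonneg_right (Finset.sum_nonneg fun _ _ => norm_nonneg _)
  intro n i j
  rcases lt_or_ge n N₀ with hn | hn
  · calc |(M ^ n) i j| ≤ ‖Mc ^ n‖ := hentry n i j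
      _ ≤ ∑ m ∈ Finset.range N₀, ‖Mc ^ m‖ :=
        Finset.single_le_sum (fun m _ => norm_nonneg _) (Finset.mem_range.2 hn)
      _ ≤ K * 1 := by rw [mul_one, hK]; linarith
      _ ≤ K * (1 + δ) ^ n := by
        refine mul_le_mul_of_nonneg_left (one_le_pow₀ (by linarith)) (by linarith)
  · calc |(M ^ n) i j| ≤ ‖Mc ^ n‖ := hentry n i j
      _ ≤ (1 + δ) ^ n := hbig n hn
      _ ≤ K * (1 + δ) ^ n := le_mul_of_one_le_left (by positivity) hK1

lemma superinv_pow {M : Matrix V V ℝ} (hM : ∀ i j, 0 ≤ M i j) {x : V → ℝ} {c : ℝ}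
    (hc : 0 ≤ c) (h : ∀ i, (M *ᵥ x) i ≤ c * x i) :
    ∀ n i, ((M ^ n) *ᵥ x) i ≤ c ^ n * x i := by
  intro n
  induction n with
  | zero => intro i; simp [Matrix.one_mulVec]
  | succ n ih =>
    intro i
    have e1 : (M ^ (n+1)) *ᵥ x = (M ^ n) *ᵥ (M *ᵥ x) := by
      rw [pow_succ, ← Matrix.mulVec_mulVec]
    rw [e1]
    have h2 : ((M ^ n) *ᵥ (M *ᵥ x)) i ≤ ((M ^ n) *ᵥ (c • x)) i :=
      mulVec_mono (pow_nonneg' hM n) (fun j => h j) i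
    have h3 : ((M ^ n) *ᵥ (c • x)) i = c * ((M ^ n) *ᵥ x) i := by
      rw [Matrix.mulVec_smul]; rfl
    calc ((M ^ n) *ᵥ (M *ᵥ x)) i ≤ c * ((M ^ n) *ᵥ x) i := h2.trans_eq h3
      _ ≤ c * (c ^ n * x i) := by
          exact mul_le_mul_of_nonneg_left (ih i) hc
      _ = c ^ (n+1) * x i := by ring

theorem exists_pos_fixed {M : Matrix V V ℝ} (hM : ∀ i j, 0 ≤ M i j)
    (hirr : ∀ i j : V, ∃ k : ℕ, 0 < (M ^ k) i j)
    (hrho : spectralRadius ℂ (M.map (algebraMap ℝ ℂ)) = 1) :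
    ∃ x : V → ℝ, (∀ i, 0 < x i) ∧ ∀ i, x i ≤ (M *ᵥ x) i := by
  classical
  set c : ℕ → V → ℝ := fun n => (M ^ n) *ᵥ (fun _ => 1) with hc
  have hc0 : ∀ i, c 0 i = 1 := by intro i; simp [hc, Matrix.one_mulVec]
  have hcnn : ∀ n i, 0 ≤ c n i := by
    intro n i
    exact Finset.sum_nonneg fun j _ => mul_nonneg (pow_nonneg' hM n i j) zero_le_one
  have hcrec : ∀ n, c (n+1) = M *ᵥ c n := by
    intro n
    simp only [hc]
    rw [pow_succ', ← Matrix.mulVec_mulVec]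
  have hcsum : ∀ n i, c n i = ∑ j, (M ^ n) i j := by
    intro n i
    simp [hc, Matrix.mulVec, dotProduct]
  -- summability of the resolvent series
  have hsummable : ∀ t : ℝ, 1 < t → ∀ i, Summable (fun n : ℕ => t⁻¹ ^ (n+1) * c n i) := by
    intro t ht i
    obtain ⟨K, hK1, hKb⟩ := pow_entry_bound (le_of_eq hrho) (δ := (t-1)/2) (by linarith)
    set a : ℝ := 1 + (t-1)/2 with ha
    have ha1 : 1 < a := by rw [ha]; linarith
    have hat : a < t := by rw [ha]; linarith
    have ht0 : (0:ℝ) < t := by linarith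
    set A : ℝ := (Fintype.card V) * K with hA
    have hA0 : 0 ≤ A := by positivity
    have hcb : ∀ n, c n i ≤ A * a ^ n := by
      intro n
      rw [hcsum]
      calc ∑ j, (M ^ n) i j ≤ ∑ _j : V, K * a ^ n := by
            refine Finset.sum_le_sum fun j _ => ?_
            have := hKb n i j
            rwa [abs_of_nonneg (pow_nonneg' hM n i j)] at this
        _ = A * a ^ n := by
            rw [Finset.sum_const, Finset.card_univ, nsmul_eq_mul, hA]; ring
    refine Summable.of_nonneg_of_le
      (fun n => mul_nonneg (pow_nonneg (inv_nonneg.2 ht0.le) _) (hcnn n i))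
      (fun n => ?_)
      (Summable.mul_left (A / t) (summable_geometric_of_lt_one (r := a / t) (by positivity) (by
        rw [div_lt_one ht0]; exact hat)))
    calc t⁻¹ ^ (n+1) * c n i ≤ t⁻¹ ^ (n+1) * (A * a ^ n) :=
          mul_le_mul_of_nonneg_left (hcb n) (pow_nonneg (inv_nonneg.2 ht0.le) _)
      _ = A / t * (a / t) ^ n := by
          rw [div_pow, pow_succ]
          field_simp
          rw [one_div, inv_pow, mul_comm, ← mul_assoc, mul_inv_cancel₀ (pow_ne_zero n ht0.ne'), one_mul]
  set u : ℝ → V → ℝ := fun t i => ∑' n : ℕ, t⁻¹ ^ (n+1) * c n i with hu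
  have hsummable' : ∀ t : ℝ, 1 < t → ∀ i, Summable (fun n : ℕ => t⁻¹ ^ n * c n i) := by
    intro t ht i
    have := (hsummable t ht i).mul_left t
    refine this.congr fun n => ?_
    have ht0 : t ≠ 0 := by positivity
    field_simp [pow_succ]
    rw [one_div, pow_succ', ← mul_assoc, mul_inv_cancel₀ ht0, one_mul, mul_comm]
  have hupos : ∀ t : ℝ, 1 < t → ∀ i, t⁻¹ ≤ u t i := by
    intro t ht i
    have h0 := Summable.le_tsum (hsummable t ht i) 0 (fun j _ => mul_nonneg
      (pow_nonneg (inv_nonneg.2 (by linarith)) _) (hcnn j i))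
    rw [hc0 i, pow_one, mul_one] at h0
    exact h0
  have hukey : ∀ t : ℝ, 1 < t → ∀ i, (M *ᵥ u t) i = t * u t i - 1 := by
    intro t ht i
    have ht0 : (0:ℝ) < t := by linarith
    have e1 : (M *ᵥ u t) i = ∑ j, M i j * u t j := by
      simp [Matrix.mulVec, dotProduct]
    have e2 : ∀ j, M i j * u t j = ∑' n : ℕ, M i j * (t⁻¹ ^ (n+1) * c n j) := by
      intro j; rw [hu]; exact (tsum_mul_left).symm
    have e3 : (M *ᵥ u t) i = ∑' n : ℕ, ∑ j, M i j * (t⁻¹ ^ (n+1) * c n j) := by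
      rw [e1]
      rw [Finset.sum_congr rfl (fun j _ => e2 j)]
      exact (Summable.tsum_finsetSum (fun j _ => (hsummable t ht j).mul_left (M i j))).symm
    have e4 : ∀ n : ℕ, ∑ j, M i j * (t⁻¹ ^ (n+1) * c n j) = t⁻¹ ^ (n+1) * c (n+1) i := by
      intro n
      rw [hcrec n]
      simp only [Matrix.mulVec, dotProduct, Finset.mul_sum]
      exact Finset.sum_congr rfl fun j _ => by ring
    rw [e3]
    rw [tsum_congr e4]
    have e5 : t * u t i = ∑' n : ℕ, t⁻¹ ^ n * c n i := by
      rw [hu, ← tsum_mul_left]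
      refine tsum_congr fun n => ?_
      have : t ≠ 0 := by positivity
      field_simp [pow_succ]
      rw [one_div, pow_succ', ← mul_assoc, mul_inv_cancel₀ this, one_mul, mul_comm]
    have e6 := Summable.tsum_eq_zero_add (hsummable' t ht i)
    rw [e5, e6, hc0 i]
    simp
  -- u is decreasing in t
  have humono : ∀ t s : ℝ, 1 < t → t ≤ s → ∀ i, u s i ≤ u t i := by
    intro t s ht hts i
    have hs : 1 < s := lt_of_lt_of_le ht hts
    refine Summable.tsum_le_tsum (fun n => ?_) (hsummable s hs i) (hsummable t ht i)
    refine mul_le_mul_of_nonneg_right (pow_le_pow_left₀ (inv_nonneg.2 (by linarith)) ?_ _) (hcnn n i)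
    exact inv_anti₀ (by linarith) hts
  -- powers superinvariance : (M^k *ᵥ u t) i ≤ t^k * u t i
  have hsup : ∀ t : ℝ, 1 < t → ∀ k i, ((M ^ k) *ᵥ u t) i ≤ t ^ k * u t i := by
    intro t ht k i
    refine superinv_pow hM (by linarith) (fun j => ?_) k i
    rw [hukey t ht j]
    linarith
  -- comparability constants from irreducibility
  set k : V → V → ℕ := fun i j => (hirr i j).choose with hk
  have hkpos : ∀ i j, 0 < (M ^ k i j) i j := fun i j => (hirr i j).choose_spec
  set κ₀ : V → V → ℝ := fun i j => 2⁻¹ ^ (k i j) * (M ^ k i j) i j with hκ₀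
  have hκ₀pos : ∀ i j, 0 < κ₀ i j := fun i j => mul_pos (by positivity) (hkpos i j)
  have hcompare : ∀ t : ℝ, 1 < t → t ≤ 2 → ∀ i j, κ₀ i j * u t j ≤ u t i := by
    intro t ht ht2 i j
    have ht0 : (0:ℝ) < t := by linarith
    have h1 : (M ^ k i j) i j * u t j ≤ ((M ^ k i j) *ᵥ u t) i := by
      simp only [Matrix.mulVec, dotProduct]
      refine Finset.single_le_sum (f := fun j' => (M ^ k i j) i j' * u t j') ?_ (Finset.mem_univ j)
      intro j' _
      exact mul_nonneg (pow_nonneg' hM _ i j') (le_trans (by positivity) (hupos t ht j'))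
    have h2 := hsup t ht (k i j) i
    have h3 : (M ^ k i j) i j * u t j ≤ t ^ k i j * u t i := le_trans h1 h2
    have h4 : t⁻¹ ^ k i j * ((M ^ k i j) i j * u t j) ≤ u t i := by
      have := mul_le_mul_of_nonneg_left h3 (pow_nonneg (inv_nonneg.2 ht0.le) (k i j))
      calc t⁻¹ ^ k i j * ((M ^ k i j) i j * u t j) ≤ t⁻¹ ^ k i j * (t ^ k i j * u t i) := this
        _ = u t i := by
            rw [← mul_assoc, ← mul_pow]
            simp [inv_mul_cancel₀ (ne_of_gt ht0)]
    refine le_trans ?_ h4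
    rw [hκ₀]
    have h5 : (2:ℝ)⁻¹ ^ k i j ≤ t⁻¹ ^ k i j := by
      refine pow_le_pow_left₀ (by norm_num) ?_ _
      exact inv_anti₀ ht0 ht2
    have h6 : 0 ≤ (M ^ k i j) i j * u t j :=
      mul_nonneg (pow_nonneg' hM _ i j) (le_trans (by positivity) (hupos t ht j))
    calc 2⁻¹ ^ k i j * (M ^ k i j) i j * u t j
        = 2⁻¹ ^ k i j * ((M ^ k i j) i j * u t j) := by ring
      _ ≤ t⁻¹ ^ k i j * ((M ^ k i j) i j * u t j) := mul_le_mul_of_nonneg_right h5 h6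
  -- global comparability constant and max function
  set κ : ℝ := Finset.univ.inf' Finset.univ_nonempty (fun p : V × V => κ₀ p.1 p.2) with hκdef
  have hκpos : 0 < κ := by
    rw [hκdef, Finset.lt_inf'_iff]
    exact fun p _ => hκ₀pos p.1 p.2
  have hκle : ∀ i j, κ ≤ κ₀ i j := fun i j =>
    Finset.inf'_le _ (Finset.mem_univ ((i, j) : V × V))
  set Mx : ℝ → ℝ := fun t => Finset.univ.sup' Finset.univ_nonempty (fun i => u t i) with hMxd
  have hMxge : ∀ t i, u t i ≤ Mx t := fun t i => Finset.le_sup' _ (Finset.mem_univ i)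
  have hMxmem : ∀ t, ∃ i, Mx t = u t i := by
    intro t
    obtain ⟨i, -, hi⟩ := Finset.exists_mem_eq_sup' (Finset.univ_nonempty) (fun i => u t i)
    exact ⟨i, hi⟩
  have hMxpos : ∀ t, 1 < t → 0 < Mx t := by
    intro t ht
    have := hupos t ht (Classical.arbitrary V)
    have h0 : (0:ℝ) < t⁻¹ := by positivity
    exact lt_of_lt_of_le (lt_of_lt_of_le h0 this) (hMxge t _)
  have hMxmono : ∀ t s, 1 < t → t ≤ s → Mx s ≤ Mx t := by
    intro t s ht hts
    exact Finset.sup'_le _ _ fun i _ => (humono t s ht hts i).trans (hMxge t i)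
  by_cases hbdd : ∃ K0, ∀ t : ℝ, 1 < t → t ≤ 2 → Mx t ≤ K0
  · exfalso
    obtain ⟨K0, hK0⟩ := hbdd
    have hK0pos : 0 < K0 := lt_of_lt_of_le (hMxpos 2 one_lt_two) (hK0 2 one_lt_two le_rfl)
    set s : ℕ → ℝ := fun n => ∑ i, c n i with hsd
    have hsnn : ∀ n, 0 ≤ s n := fun n => Finset.sum_nonneg fun i _ => hcnn n i
    have key : ∃ n, 1 ≤ n ∧ s n ≤ 1/2 := by
      by_contra hcon
      push_neg at hcon
      obtain ⟨N, hN⟩ := exists_nat_gt (4 * (Fintype.card V) * K0 + 4)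
      set t : ℝ := 2 ^ ((1:ℝ)/(N+1)) with htdef
      have hexp : (0:ℝ) < 1/(N+1) := by positivity
      have ht1 : 1 < t := by
        rw [htdef, Real.one_lt_rpow_iff_of_pos (by norm_num)]
        exact Or.inl ⟨one_lt_two, hexp⟩
      have ht2 : t ≤ 2 := by
        have h1 : t ≤ 2 ^ (1:ℝ) := by
          refine Real.rpow_le_rpow_of_exponent_le one_le_two ?_
          rw [div_le_one (by positivity)]
          have : (0:ℝ) ≤ N := Nat.cast_nonneg N
          linarith
        rwa [Real.rpow_one] at h1
      have htpow : ∀ n : ℕ, n ≤ N → (1:ℝ)/2 ≤ t⁻¹ ^ (n+1) := by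
        intro n hn
        have h1 : t ^ (n+1) ≤ 2 := by
          have e1 : t ^ (n+1) = 2 ^ (((n:ℝ)+1)/((N:ℝ)+1)) := by
            rw [htdef, ← Real.rpow_natCast (2 ^ ((1:ℝ)/(N+1))) (n+1),
              ← Real.rpow_mul (by norm_num)]
            congr 1
            push_cast
            ring
          rw [e1]
          have h2 : ((n:ℝ)+1)/((N:ℝ)+1) ≤ 1 := by
            rw [div_le_one (by positivity)]
            have : (n:ℝ) ≤ N := Nat.cast_le.2 hn
            linarith
          calc (2:ℝ) ^ (((n:ℝ)+1)/((N:ℝ)+1)) ≤ 2 ^ (1:ℝ) :=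
                Real.rpow_le_rpow_of_exponent_le one_le_two h2
            _ = 2 := Real.rpow_one 2
        rw [inv_pow, ← one_div]
        exact one_div_le_one_div_of_le (by positivity) h1
      have hpart : ∀ i, ∑ n ∈ Finset.range (N+1), c n i ≤ 2 * K0 := by
        intro i
        have h1 : ∑ n ∈ Finset.range (N+1), t⁻¹ ^ (n+1) * c n i ≤ u t i :=
          Summable.sum_le_tsum _ (fun n _ => mul_nonneg (by positivity) (hcnn n i))
            (hsummable t ht1 i)
        have h2 : ∑ n ∈ Finset.range (N+1), (1/2 : ℝ) * c n i ≤
            ∑ n ∈ Finset.range (N+1), t⁻¹ ^ (n+1) * c n i := by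
          refine Finset.sum_le_sum fun n hn => ?_
          exact mul_le_mul_of_nonneg_right
            (htpow n (by simpa [Nat.lt_succ_iff] using Finset.mem_range.1 hn)) (hcnn n i)
        have h3 := (h2.trans h1).trans ((hMxge t i).trans (hK0 t ht1 ht2))
        rw [← Finset.mul_sum] at h3
        linarith
      have hsums : ∑ n ∈ Finset.range (N+1), s n ≤ 2 * K0 * (Fintype.card V) := by
        simp only [hsd]
        rw [Finset.sum_comm]
        calc ∑ i : V, ∑ n ∈ Finset.range (N+1), c n i ≤ ∑ _i : V, 2 * K0 :=
              Finset.sum_le_sum fun i _ => hpart i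
          _ = 2 * K0 * (Fintype.card V) := by
              rw [Finset.sum_const, Finset.card_univ, nsmul_eq_mul]; ring
      have hlow : (N:ℝ) * (1/2) ≤ ∑ n ∈ Finset.range (N+1), s n := by
        rw [Finset.sum_range_succ']
        have h1 : (N:ℝ) * (1/2) ≤ ∑ m ∈ Finset.range N, s (m+1) := by
          calc (N:ℝ) * (1/2) = ∑ _m ∈ Finset.range N, (1/2 : ℝ) := by
                rw [Finset.sum_const, Finset.card_range, nsmul_eq_mul]
            _ ≤ ∑ m ∈ Finset.range N, s (m+1) :=
                Finset.sum_le_sum fun m _ => (hcon (m+1) (by omega)).le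
        exact h1.trans (le_add_of_nonneg_right (hsnn 0))
      have hcard : (1:ℝ) ≤ (Fintype.card V : ℝ) := by
        exact_mod_cast Fintype.card_pos
      nlinarith [hlow.trans hsums]
    obtain ⟨n, hn1, hnval⟩ := key
    have hbound : ∀ lam ∈ spectrum ℂ (M.map (algebraMap ℝ ℂ)),
        ‖lam‖ ≤ (1/2 : ℝ) ^ ((1:ℝ)/n) := by
      intro lam hlam
      obtain ⟨y, hynn, ⟨i1, hi1⟩, hy⟩ := exists_abs_eigvec hM hlam
      obtain ⟨i₀, -, hmax⟩ := Finset.exists_max_image Finset.univ y ⟨i1, Finset.mem_univ i1⟩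
      have hyi₀ : 0 < y i₀ := lt_of_lt_of_le hi1 (hmax i1 (Finset.mem_univ i1))
      have hy' : ∀ i, ‖lam‖ * y i ≤ (M *ᵥ y) i := by
        intro i
        refine (hy i).trans_eq ?_
        simp [Matrix.mulVec, dotProduct]
      have h1 := subinv_pow hM (norm_nonneg lam) hy' n i₀
      have h2 : ((M ^ n) *ᵥ y) i₀ ≤ s n * y i₀ := by
        simp only [Matrix.mulVec, dotProduct]
        calc ∑ j, (M^n) i₀ j * y j ≤ ∑ j, (M^n) i₀ j * y i₀ :=
              Finset.sum_le_sum fun j _ => mul_le_mul_of_nonneg_left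
                (hmax j (Finset.mem_univ j)) (pow_nonneg' hM n i₀ j)
          _ = c n i₀ * y i₀ := by rw [hcsum, Finset.sum_mul]
          _ ≤ s n * y i₀ := by
              refine mul_le_mul_of_nonneg_right ?_ hyi₀.le
              rw [hsd]
              exact Finset.single_le_sum (fun i _ => hcnn n i) (Finset.mem_univ i₀)
      have h3 : ‖lam‖ ^ n ≤ s n := by
        have h4 := h1.trans h2
        exact le_of_mul_le_mul_right h4 hyi₀
      have h4 : ‖lam‖ ^ n ≤ 1/2 := h3.trans hnval
      calc ‖lam‖ = (‖lam‖ ^ n) ^ ((1:ℝ)/n) := by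
            rw [← Real.rpow_natCast ‖lam‖ n, ← Real.rpow_mul (norm_nonneg lam),
              mul_one_div, div_self (Nat.cast_ne_zero.2 (by omega)), Real.rpow_one]
        _ ≤ (1/2 : ℝ) ^ ((1:ℝ)/n) :=
            Real.rpow_le_rpow (pow_nonneg (norm_nonneg lam) n) h4 (by positivity)
    have h5 := specRad_le_of_forall M (by positivity) hbound
    rw [hrho] at h5
    have h6 : ENNReal.ofReal ((1/2:ℝ) ^ ((1:ℝ)/n)) < 1 := by
      rw [ENNReal.ofReal_lt_one]
      exact Real.rpow_lt_one (by norm_num) (by norm_num) (by positivity)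
    exact absurd (h5.trans_lt h6) (lt_irrefl _)
  · push_neg at hbdd
    choose T hT1 hT2 hT3 using hbdd
    set τ : ℕ → ℝ := fun n => min (T (n+1)) (1 + 1/(n+1)) with hτd
    have hτ1 : ∀ n, 1 < τ n := by
      intro n
      refine lt_min (hT1 _) ?_
      have : (0:ℝ) < 1/((n:ℝ)+1) := by positivity
      linarith
    have hτ2 : ∀ n, τ n ≤ 2 := fun n => (min_le_left _ _).trans (hT2 _)
    have hτle : ∀ n : ℕ, τ n ≤ 1 + 1/((n:ℝ)+1) := fun n => min_le_right _ _
    have hMxτ : ∀ n : ℕ, ((n:ℝ)+1) < Mx (τ n) :=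
      fun n => lt_of_lt_of_le (hT3 ((n:ℝ)+1)) (hMxmono (τ n) (T ((n:ℝ)+1)) (hτ1 n) (min_le_left _ _))
    set x : ℕ → V → ℝ := fun n i => u (τ n) i / Mx (τ n) with hxd
    have hxlb : ∀ n i, κ ≤ x n i := by
      intro n i
      obtain ⟨j, hj⟩ := hMxmem (τ n)
      have h1 : κ * Mx (τ n) ≤ u (τ n) i := by
        rw [hj]
        calc κ * u (τ n) j ≤ κ₀ i j * u (τ n) j := by
              refine mul_le_mul_of_nonneg_right (hκle i j) ?_
              exact le_trans (inv_nonneg.2 (le_of_lt (lt_trans one_pos (hτ1 n))))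
                (hupos (τ n) (hτ1 n) j)
          _ ≤ u (τ n) i := hcompare (τ n) (hτ1 n) (hτ2 n) i j
      rw [hxd]
      exact (le_div_iff₀ (hMxpos _ (hτ1 n))).2 h1
    have hxub : ∀ n i, x n i ≤ 1 := by
      intro n i
      rw [hxd]
      exact (div_le_one (hMxpos _ (hτ1 n))).2 (hMxge _ i)
    have hxmem : ∀ n, x n ∈ Set.Icc (fun _ : V => κ) (fun _ : V => (1:ℝ)) :=
      fun n => ⟨fun i => hxlb n i, fun i => hxub n i⟩
    obtain ⟨y, hymem, φ, hφ, hconv⟩ := (isCompact_Icc).tendsto_subseq hxmem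
    refine ⟨y, fun i => lt_of_lt_of_le hκpos (hymem.1 i), ?_⟩
    have hcoord : ∀ i, Tendsto (fun m => x (φ m) i) atTop (𝓝 (y i)) :=
      fun i => ((continuous_apply i).tendsto y).comp hconv
    have hMcoord : ∀ i, Tendsto (fun m => (M *ᵥ x (φ m)) i) atTop (𝓝 ((M *ᵥ y) i)) := by
      intro i
      simp only [Matrix.mulVec, dotProduct]
      exact tendsto_finset_sum _ (fun j _ => (hcoord j).const_mul (M i j))
    have hident : ∀ m i, (M *ᵥ x m) i = τ m * x m i - 1 / Mx (τ m) := by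
      intro m i
      have hMx0 : Mx (τ m) ≠ 0 := (hMxpos _ (hτ1 m)).ne'
      have h1 : (M *ᵥ x m) i = (M *ᵥ u (τ m)) i / Mx (τ m) := by
        simp only [hxd, Matrix.mulVec, dotProduct]
        rw [Finset.sum_div]
        exact Finset.sum_congr rfl fun j _ => by ring
      rw [h1, hukey (τ m) (hτ1 m) i, hxd]
      field_simp
    have hdiv : ∀ m : ℕ, (1:ℝ)/((φ m:ℝ)+1) ≤ 1/((m:ℝ)+1) := by
      intro m
      refine one_div_le_one_div_of_le (by positivity) ?_
      have : (m:ℝ) ≤ (φ m : ℝ) := Nat.cast_le.2 (hφ.le_apply)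
      linarith
    have hzero : Tendsto (fun m : ℕ => 1/((m:ℝ)+1)) atTop (𝓝 0) :=
      tendsto_one_div_add_atTop_nhds_zero_nat
    have hτtend : Tendsto (fun m => τ (φ m)) atTop (𝓝 1) := by
      have hub : Tendsto (fun m : ℕ => 1 + 1/((m:ℝ)+1)) atTop (𝓝 (1 + 0)) :=
        tendsto_const_nhds.add hzero
      rw [add_zero] at hub
      refine tendsto_of_tendsto_of_tendsto_of_le_of_le
        (tendsto_const_nhds : Tendsto (fun _ : ℕ => (1:ℝ)) atTop (𝓝 1)) hub
        (fun m => (hτ1 (φ m)).le) (fun m => (hτle (φ m)).trans ?_)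
      have := hdiv m
      linarith
    have hMtend : Tendsto (fun m => 1 / Mx (τ (φ m))) atTop (𝓝 0) := by
      refine tendsto_of_tendsto_of_tendsto_of_le_of_le
        (tendsto_const_nhds : Tendsto (fun _ : ℕ => (0:ℝ)) atTop (𝓝 0)) hzero
        (fun m => (one_div_pos.2 (hMxpos _ (hτ1 (φ m)))).le)
        (fun m => le_trans (one_div_le_one_div_of_le (by positivity) (hMxτ (φ m)).le) (hdiv m))
    have hfix : ∀ i, (M *ᵥ y) i = y i := by
      intro i
      have h1 : Tendsto (fun m => (M *ᵥ x (φ m)) i) atTop (𝓝 (1 * y i - 0)) := by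
        refine Tendsto.congr (fun m => (hident (φ m) i).symm) ?_
        exact (hτtend.mul (hcoord i)).sub hMtend
      have h2 := tendsto_nhds_unique (hMcoord i) h1
      rw [h2]; ring
    exact fun i => le_of_eq (hfix i).symm


end L37

set_option linter.unusedSectionVars false
namespace Sec4
open Matrix Filter
variable {m : ℕ} {V E : Type} [Fintype V] [Fintype E] [DecidableEq V] [DecidableEq E]
variable (G : GIFS m V E) (w : E → ℝ) (q γ : ℝ)

/-- weight of a path -/
noncomputable def wt (p : List E) : ℝ := pathProb w p ^ q * G.pathRatio p ^ γ

lemma pathProb_pos (hw : ∀ e, 0 < w e) (p : List E) : 0 < pathProb w p := by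
  refine List.prod_pos fun a ha => ?_
  obtain ⟨e, _, rfl⟩ := List.mem_map.1 ha
  exact hw e

lemma pathRatio_pos (p : List E) : 0 < G.pathRatio p := by
  refine List.prod_pos fun a ha => ?_
  obtain ⟨e, _, rfl⟩ := List.mem_map.1 ha
  exact G.ratio_pos e

lemma wt_pos (hw : ∀ e, 0 < w e) (p : List E) : 0 < wt G w q γ p :=
  mul_pos (Real.rpow_pos_of_pos (pathProb_pos w hw p) q)
    (Real.rpow_pos_of_pos (pathRatio_pos G p) γ)

lemma wt_cons (hw : ∀ e, 0 < w e) (e : E) (p : List E) :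
    wt G w q γ (e :: p) = (w e ^ q * G.ratio e ^ γ) * wt G w q γ p := by
  unfold wt
  have h1 : pathProb w (e :: p) = w e * pathProb w p := by
    simp [pathProb]
  have h2 : G.pathRatio (e :: p) = G.ratio e * G.pathRatio p := by
    simp [GIFS.pathRatio]
  rw [h1, h2, Real.mul_rpow (hw e).le (pathProb_pos w hw p).le,
    Real.mul_rpow (G.ratio_pos e).le (pathRatio_pos G p).le]
  ring

lemma isPathFrom_singleton (u v : V) (e : E) :
    G.IsPathFrom u v [e] ↔ (G.src e = u ∧ G.dst e = v) := by
  unfold GIFS.IsPathFrom GIFS.IsPath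
  simp [List.Chain', List.isChain_singleton]

lemma isPathFrom_cons (u v : V) (e : E) (p : List E) (hp : p ≠ []) :
    G.IsPathFrom u v (e :: p) ↔ (G.src e = u ∧ G.IsPathFrom (G.dst e) v p) := by
  obtain ⟨f, p', rfl⟩ := List.exists_cons_of_ne_nil hp
  unfold GIFS.IsPathFrom GIFS.IsPath
  unfold List.Chain'
  rw [List.isChain_cons_cons]
  simp only [List.head?_cons, List.getLast?_cons_cons, Option.map_some, Option.some.injEq,
    ne_eq, List.cons_ne_nil, not_false_eq_true, true_and]
  constructor
  · rintro ⟨⟨h1, h2⟩, h3, h4⟩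
    exact ⟨h3, h2, by rw [h1], h4⟩
  · rintro ⟨h3, h2, h1, h4⟩
    exact ⟨⟨h1.symm, h2⟩, h3, h4⟩

/-- sum of weights over all length-`l` paths from `u` to `v` -/
noncomputable def pathSum (l : ℕ) (u v : V) : ℝ :=
  ∑ p : List.Vector E l,
    Set.indicator {p : List.Vector E l | G.IsPathFrom u v p.toList}
      (fun p => pathProb w p.toList ^ q * G.pathRatio p.toList ^ γ) p

lemma pathSum_nonneg (hw : ∀ e, 0 < w e) (l : ℕ) (u v : V) : 0 ≤ pathSum G w q γ l u v := by
  classical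
  refine Finset.sum_nonneg fun p _ => ?_
  rw [Set.indicator_apply]
  split
  · exact (wt_pos G w q γ hw p.toList).le
  · exact le_rfl

lemma wt_singleton (e : E) : wt G w q γ [e] = w e ^ q * G.ratio e ^ γ := by
  unfold wt pathProb GIFS.pathRatio
  simp

def vecOne : List.Vector E 1 ≃ E where
  toFun := List.Vector.head
  invFun e := e ::ᵥ List.Vector.nil
  left_inv p := by
    have h : p.tail = List.Vector.nil := List.Vector.eq_nil p.tail
    conv_rhs => rw [← p.cons_head_tail, h]
  right_inv e := by simp [List.Vector.head_cons]

lemma toList_eq_singleton (p : List.Vector E 1) : p.toList = [p.head] := by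
  have h := congrArg List.Vector.toList p.cons_head_tail
  rw [← h, List.Vector.toList_cons, List.Vector.eq_nil p.tail,
    List.Vector.toList_nil]

def vecSucc (l : ℕ) : List.Vector E (l+1) ≃ E × List.Vector E l where
  toFun p := (p.head, p.tail)
  invFun x := x.1 ::ᵥ x.2
  left_inv p := p.cons_head_tail
  right_inv x := by
    cases x
    simp [List.Vector.head_cons, List.Vector.tail_cons]

lemma pathSum_one (u v : V) : pathSum G w q γ 1 u v = G.matA w q γ u v := by
  classical
  unfold pathSum GIFS.matA
  rw [Matrix.of_apply]
  rw [Fintype.sum_equiv (vecOne (E := E))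
    (fun p : List.Vector E 1 => Set.indicator
      {p : List.Vector E 1 | G.IsPathFrom u v p.toList}
      (fun p => pathProb w p.toList ^ q * G.pathRatio p.toList ^ γ) p)
    (fun e : E => Set.indicator {e : E | G.src e = u ∧ G.dst e = v}
      (fun e => w e ^ q * G.ratio e ^ γ) e) ?_]
  intro p
  have h1 : p.toList = [p.head] := toList_eq_singleton p
  have h2 : G.IsPathFrom u v p.toList ↔ (G.src p.head = u ∧ G.dst p.head = v) := by
    rw [h1]; exact isPathFrom_singleton G u v p.head
  simp only [Set.indicator_apply, Set.mem_setOf_eq]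
  show (if G.IsPathFrom u v p.toList then pathProb w p.toList ^ q * G.pathRatio p.toList ^ γ
      else 0) =
    (if G.src p.head = u ∧ G.dst p.head = v then w p.head ^ q * G.ratio p.head ^ γ else 0)
  by_cases hc : G.IsPathFrom u v p.toList
  · rw [if_pos hc, if_pos (h2.1 hc), h1]
    exact wt_singleton G w q γ p.head
  · rw [if_neg hc, if_neg (fun h => hc (h2.2 h))]

lemma matA_mul_entry (N : Matrix V V ℝ) (u v : V) :
    (G.matA w q γ * N) u v = ∑ e : E, Set.indicator {e : E | G.src e = u}
      (fun e => (w e ^ q * G.ratio e ^ γ) * N (G.dst e) v) e := by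
  classical
  rw [Matrix.mul_apply]
  unfold GIFS.matA
  simp only [Matrix.of_apply, Finset.sum_mul]
  rw [Finset.sum_comm]
  refine Finset.sum_congr rfl fun e _ => ?_
  by_cases hsrc : G.src e = u
  · rw [Set.indicator_of_mem (show e ∈ {e : E | G.src e = u} from hsrc)]
    have h1 : ∀ z : V, Set.indicator {e' : E | G.src e' = u ∧ G.dst e' = z}
        (fun e' => w e' ^ q * G.ratio e' ^ γ) e * N z v =
        if z = G.dst e then (w e ^ q * G.ratio e ^ γ) * N z v else 0 := by
      intro z
      by_cases hz : z = G.dst e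
      · subst hz
        rw [Set.indicator_of_mem
          (show e ∈ {e' : E | G.src e' = u ∧ G.dst e' = G.dst e} from ⟨hsrc, rfl⟩), if_pos rfl]
      · rw [Set.indicator_of_notMem
          (show e ∉ {e' : E | G.src e' = u ∧ G.dst e' = z} from fun h => hz h.2.symm),
          if_neg hz, zero_mul]
    rw [Finset.sum_congr rfl (fun z _ => h1 z), Finset.sum_ite_eq' Finset.univ (G.dst e)]
    simp
  · rw [Set.indicator_of_notMem (show e ∉ {e : E | G.src e = u} from hsrc)]
    refine Finset.sum_eq_zero fun z _ => ?_
    rw [Set.indicator_of_notMem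
      (show e ∉ {e' : E | G.src e' = u ∧ G.dst e' = z} from fun h => hsrc h.1), zero_mul]

lemma pathSum_succ (hw : ∀ e, 0 < w e) (l : ℕ) (hl : 1 ≤ l) (u v : V) :
    pathSum G w q γ (l+1) u v = ∑ e : E, Set.indicator {e : E | G.src e = u}
      (fun e => (w e ^ q * G.ratio e ^ γ) * pathSum G w q γ l (G.dst e) v) e := by
  classical
  unfold pathSum
  rw [← Fintype.sum_equiv ((vecSucc (E := E) l).symm)
    (fun x : E × List.Vector E l => Set.indicator
      {p : List.Vector E (l+1) | G.IsPathFrom u v p.toList}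
      (fun p => pathProb w p.toList ^ q * G.pathRatio p.toList ^ γ) (x.1 ::ᵥ x.2))
    (fun p : List.Vector E (l+1) => Set.indicator
      {p : List.Vector E (l+1) | G.IsPathFrom u v p.toList}
      (fun p => pathProb w p.toList ^ q * G.pathRatio p.toList ^ γ) p)
    (fun x => rfl)]
  rw [Fintype.sum_prod_type]
  refine Finset.sum_congr rfl fun e _ => ?_
  have hne : ∀ p : List.Vector E l, p.toList ≠ [] := by
    intro p h
    have := p.toList_length
    rw [h] at this
    simp at this
    omega
  by_cases hsrc : G.src e = u
  · rw [Set.indicator_of_mem (show e ∈ {e : E | G.src e = u} from hsrc)]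
    rw [Finset.mul_sum]
    refine Finset.sum_congr rfl fun p _ => ?_
    rw [Set.indicator_apply, Set.indicator_apply]
    have htl : (e ::ᵥ p).toList = e :: p.toList := List.Vector.toList_cons e p
    have hiff : ((e ::ᵥ p) ∈ {p : List.Vector E (l+1) | G.IsPathFrom u v p.toList}) ↔
        (p ∈ {p : List.Vector E l | G.IsPathFrom (G.dst e) v p.toList}) := by
      simp only [Set.mem_setOf_eq, htl]
      rw [isPathFrom_cons G u v e p.toList (hne p)]
      exact and_iff_right hsrc
    rw [if_congr hiff rfl rfl]
    split
    · show pathProb w (e ::ᵥ p).toList ^ q * G.pathRatio (e ::ᵥ p).toList ^ γ = _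
      rw [htl]
      exact wt_cons G w q γ hw e p.toList
    · rw [mul_zero]
  · rw [Set.indicator_of_notMem (show e ∉ {e : E | G.src e = u} from hsrc)]
    refine Finset.sum_eq_zero fun p _ => ?_
    rw [Set.indicator_apply]
    split
    · rename_i hmem
      rw [Set.mem_setOf_eq, List.Vector.toList_cons,
        isPathFrom_cons G u v e p.toList (hne p)] at hmem
      exact absurd hmem.1 hsrc
    · rfl

lemma pathSum_eq_pow (hw : ∀ e, 0 < w e) :
    ∀ l : ℕ, 1 ≤ l → ∀ u v : V, pathSum G w q γ l u v = ((G.matA w q γ) ^ l) u v := by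
  intro l hl
  induction l, hl using Nat.le_induction with
  | base =>
    intro u v
    rw [pow_one]
    exact pathSum_one G w q γ u v
  | succ l hl IH =>
    intro u v
    rw [pathSum_succ G w q γ hw l hl u v, pow_succ']
    rw [matA_mul_entry G w q γ ((G.matA w q γ) ^ l) u v]
    refine Finset.sum_congr rfl fun e _ => ?_
    rw [Set.indicator_apply, Set.indicator_apply]
    split
    · rw [IH (G.dst e) v]
    · rfl


lemma matA_nonneg (hw : ∀ e, 0 < w e) (u v : V) : 0 ≤ G.matA w q γ u v := by
  classical
  unfold GIFS.matA
  rw [Matrix.of_apply]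
  refine Finset.sum_nonneg fun e _ => ?_
  rw [Set.indicator_apply]
  split
  · exact (mul_pos (Real.rpow_pos_of_pos (hw e) q)
      (Real.rpow_pos_of_pos (G.ratio_pos e) γ)).le
  · exact le_rfl

lemma matA_mono (hw : ∀ e, 0 < w e) {β : ℝ} (hβγ : β ≤ γ) (u v : V) :
    G.matA w q γ u v ≤ G.matA w q β u v := by
  classical
  unfold GIFS.matA
  rw [Matrix.of_apply, Matrix.of_apply]
  refine Finset.sum_le_sum fun e _ => ?_
  simp only [Set.indicator_apply]
  split
  · refine mul_le_mul_of_nonneg_left ?_ (Real.rpow_pos_of_pos (hw e) q).le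
    exact Real.rpow_le_rpow_of_exponent_ge (G.ratio_pos e) (G.ratio_lt_one e).le hβγ
  · exact le_rfl

lemma matB_nonneg (hw : ∀ e, 0 < w e) (l : ℕ) (lu : V → List E) (u v : V) :
    0 ≤ G.matB w q γ l lu u v := by
  classical
  unfold GIFS.matB
  rw [Matrix.of_apply]
  refine Finset.sum_nonneg fun p _ => ?_
  rw [Set.indicator_apply]
  split
  · exact (wt_pos G w q γ hw p.toList).le
  · exact le_rfl

lemma matB_le_pathSum (hw : ∀ e, 0 < w e) (l : ℕ) (lu : V → List E) (u v : V) :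
    G.matB w q γ l lu u v ≤ pathSum G w q γ l u v := by
  classical
  unfold GIFS.matB pathSum
  rw [Matrix.of_apply]
  refine Finset.sum_le_sum fun p _ => ?_
  simp only [Set.indicator_apply, Set.mem_setOf_eq]
  split_ifs with h1 h2
  · exact le_rfl
  · exact absurd h1.1 h2
  · exact (wt_pos G w q γ hw p.toList).le
  · exact le_rfl

lemma matB_add_le (hw : ∀ e, 0 < w e) (l : ℕ) (lu : V → List E) (u v : V)
    (hpath : G.IsPathFrom u v (lu u)) (hlen : (lu u).length = l) :
    G.matB w q γ l lu u v + wt G w q γ (lu u) ≤ pathSum G w q γ l u v := by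
  classical
  set p₀ : List.Vector E l := ⟨lu u, hlen⟩ with hp₀
  have hp₀l : p₀.toList = lu u := rfl
  have e1 : G.matB w q γ l lu u v + wt G w q γ (lu u) =
      ∑ p : List.Vector E l,
        (Set.indicator {p : List.Vector E l | G.IsPathFrom u v p.toList ∧ p.toList ≠ lu u}
          (fun p => pathProb w p.toList ^ q * G.pathRatio p.toList ^ γ) p +
         if p = p₀ then wt G w q γ (lu u) else 0) := by
    rw [Finset.sum_add_distrib, Finset.sum_ite_eq' Finset.univ p₀, if_pos (Finset.mem_univ p₀)]
    rfl
  rw [e1]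
  unfold pathSum
  refine Finset.sum_le_sum fun p _ => ?_
  by_cases hp : p = p₀
  · subst hp
    rw [if_pos rfl]
    rw [Set.indicator_of_notMem (by
      rw [Set.mem_setOf_eq, hp₀l]
      exact fun h => h.2 rfl)]
    rw [Set.indicator_of_mem (by rw [Set.mem_setOf_eq, hp₀l]; exact hpath)]
    rw [zero_add, hp₀l]
    exact le_of_eq rfl
  · rw [if_neg hp, add_zero]
    simp only [Set.indicator_apply, Set.mem_setOf_eq]
    split_ifs with h1 h2
    · exact le_rfl
    · exact absurd h1.1 h2
    · exact (wt_pos G w q γ hw p.toList).le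
    · exact le_rfl

end Sec4

open Matrix


open Sec4 L37

/-- **Lemma 3.7.** Suppose the OSC holds and `B(q,γ,l)` is irreducible. If `β = β(q)` is
the unique real with `ρ(A(q,β)) = 1` and `γ = γ(q)` the unique real with
`ρ(B(q,γ,l)) = 1`, then `γ < β`. -/
theorem statement10
    {m : ℕ} (hm : 1 ≤ m) {V E : Type} [Fintype V] [Fintype E]
    [DecidableEq V] [DecidableEq E] [Nonempty V] [Nonempty E]
    (G : GIFS m V E) (w : E → ℝ) (hw : G.IsProbWeights w)
    (F : V → Set (Euc m)) (hF : G.IsAttractor F)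
    (U : V → Set (Euc m)) (hU : G.OSCWith U)
    (l : ℕ) (hl : 0 < l) (lu : V → List E)
    (hlu : ∀ u : V, ∃ v : V, G.IsPathFrom u v (lu u) ∧ (lu u).length = l ∧
      G.pathMap (lu u) '' F v ⊆ U u)
    (q β γ : ℝ)
    (hβ : specRad (G.matA w q β) = 1)
    (hBirr : MatIrreducible (G.matB w q γ l lu))
    (hγ : specRad (G.matB w q γ l lu) = 1) :
    γ < β := by
  classical
  by_contra hcon
  push_neg at hcon   -- β ≤ γ
  have hwpos : ∀ e, 0 < w e := fun e => (hw.1 e).1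
  have hl1 : 1 ≤ l := hl
  -- matrices
  set A : Matrix V V ℝ := G.matA w q γ with hA
  set Aβ : Matrix V V ℝ := G.matA w q β with hAβ
  set B : Matrix V V ℝ := G.matB w q γ l lu with hB
  have hAnn : ∀ u v, 0 ≤ A u v := fun u v => matA_nonneg G w q γ hwpos u v
  have hAβnn : ∀ u v, 0 ≤ Aβ u v := fun u v => matA_nonneg G w q β hwpos u v
  have hBnn : ∀ u v, 0 ≤ B u v := fun u v => matB_nonneg G w q γ hwpos l lu u v
  have hAle : ∀ u v, A u v ≤ Aβ u v := fun u v => matA_mono G w q γ hwpos hcon u v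
  -- Perron eigenvector for B
  simp only [specRad] at hβ hγ
  obtain ⟨x, hxpos, hxfix⟩ := exists_pos_fixed hBnn hBirr hγ
  -- deficiency: (A^l x)_u ≥ x_u + d_u
  have hkey : ∀ u : V, ∃ d : ℝ, 0 < d ∧ x u + d ≤ ((A ^ l) *ᵥ x) u := by
    intro u
    obtain ⟨vu, hpath, hlen, -⟩ := hlu u
    refine ⟨wt G w q γ (lu u) * x vu,
      mul_pos (wt_pos G w q γ hwpos (lu u)) (hxpos vu), ?_⟩
    have h2 : ∀ v, B u v ≤ (A ^ l) u v := fun v =>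
      (matB_le_pathSum G w q γ hwpos l lu u v).trans_eq (pathSum_eq_pow G w q γ hwpos l hl1 u v)
    have h3 : B u vu + wt G w q γ (lu u) ≤ (A ^ l) u vu :=
      (matB_add_le G w q γ hwpos l lu u vu hpath hlen).trans_eq
        (pathSum_eq_pow G w q γ hwpos l hl1 u vu)
    have h4 : wt G w q γ (lu u) * x vu ≤ ∑ v, ((A ^ l) u v - B u v) * x v := by
      refine le_trans ?_ (Finset.single_le_sum
        (f := fun v => ((A ^ l) u v - B u v) * x v)
        (fun v _ => mul_nonneg (by linarith [h2 v]) (hxpos v).le) (Finset.mem_univ vu))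
      refine mul_le_mul_of_nonneg_right (by linarith [h3]) (hxpos vu).le
    have h5 : ∑ v, ((A ^ l) u v - B u v) * x v = ((A ^ l) *ᵥ x) u - (B *ᵥ x) u := by
      simp only [Matrix.mulVec, dotProduct, sub_mul, Finset.sum_sub_distrib]
    have h6 := hxfix u
    rw [h5] at h4
    linarith
  choose d hd hdle using hkey
  -- uniform ε
  set ε : ℝ := Finset.univ.inf' Finset.univ_nonempty (fun u => d u / x u) with hεd
  have hεpos : 0 < ε := by
    rw [hεd, Finset.lt_inf'_iff]
    exact fun u _ => div_pos (hd u) (hxpos u)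
  have hεle : ∀ u, ε ≤ d u / x u := fun u => Finset.inf'_le _ (Finset.mem_univ u)
  have hsub : ∀ u, (1 + ε) * x u ≤ ((A ^ l) *ᵥ x) u := by
    intro u
    have h1 : ε * x u ≤ d u := by
      have := hεle u
      rw [le_div_iff₀ (hxpos u)] at this
      linarith
    have := hdle u
    linarith
  -- iterate
  have hAlnn : ∀ i j, 0 ≤ (A ^ l) i j := pow_nonneg' hAnn l
  have hiter := subinv_pow hAlnn (by linarith : (0:ℝ) ≤ 1 + ε) hsub
  -- growth of Aβ powers
  set a : ℝ := Real.sqrt (1 + ε) with had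
  have ha1 : 1 < a := by
    rw [had]
    refine (Real.lt_sqrt zero_le_one).2 ?_
    rw [one_pow]
    linarith
  have ha2 : a ^ 2 = 1 + ε := Real.sq_sqrt (by linarith)
  set b : ℝ := a ^ ((1:ℝ)/l) with hbd
  have hb1 : 1 < b := by
    rw [hbd, Real.one_lt_rpow_iff_of_pos (by linarith)]
    exact Or.inl ⟨ha1, by positivity⟩
  have hbl : b ^ l = a := by
    rw [hbd, ← Real.rpow_natCast (a ^ ((1:ℝ)/l)) l, ← Real.rpow_mul (by linarith),
      one_div_mul_cancel (Nat.cast_ne_zero.2 (by omega)), Real.rpow_one]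
  obtain ⟨K, hK1, hKb⟩ := pow_entry_bound (le_of_eq hβ) (δ := b - 1) (by linarith)
  -- final contradiction
  have hXd : ∃ X : ℝ, 0 < X ∧ ∀ v, x v ≤ X :=
    ⟨Finset.univ.sup' Finset.univ_nonempty x,
      lt_of_lt_of_le (hxpos (Classical.arbitrary V)) (Finset.le_sup' _ (Finset.mem_univ _)),
      fun v => Finset.le_sup' _ (Finset.mem_univ v)⟩
  obtain ⟨X, hX0, hXle⟩ := hXd
  set u0 : V := Classical.arbitrary V with hu0
  set C : ℝ := (Fintype.card V) * K * X with hCd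
  have hC0 : 0 < C := by
    have : (0:ℝ) < Fintype.card V := by exact_mod_cast Fintype.card_pos
    rw [hCd]; positivity
  have hchain : ∀ n : ℕ, (1 + ε) ^ n * x u0 ≤ C * a ^ n := by
    intro n
    have h1 := hiter n u0
    have h2 : (((A ^ l) ^ n) *ᵥ x) u0 ≤ C * a ^ n := by
      have e1 : (A ^ l) ^ n = A ^ (l * n) := (pow_mul A l n).symm
      have h3 : ∀ v, (A ^ (l * n)) u0 v ≤ K * b ^ (l * n) := by
        intro v
        refine le_trans (pow_entrywise_le hAnn hAle (l * n) u0 v) ?_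
        have h4 := hKb (l * n) u0 v
        rw [abs_of_nonneg (pow_nonneg' hAβnn (l * n) u0 v)] at h4
        calc (Aβ ^ (l * n)) u0 v ≤ K * (1 + (b - 1)) ^ (l * n) := h4
          _ = K * b ^ (l * n) := by ring_nf
      have h5 : (((A ^ l) ^ n) *ᵥ x) u0 ≤ ∑ _v : V, (K * b ^ (l * n)) * X := by
        rw [e1]
        simp only [Matrix.mulVec, dotProduct]
        refine Finset.sum_le_sum fun v _ => ?_
        exact mul_le_mul (h3 v) (hXle v) (hxpos v).le
          (by positivity)
      refine h5.trans ?_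
      rw [Finset.sum_const, Finset.card_univ, nsmul_eq_mul, hCd, pow_mul, hbl]
      ring_nf
      exact le_rfl
    exact h1.trans h2
  obtain ⟨n, hn⟩ := pow_unbounded_of_one_lt (C / x u0) ha1
  have h7 := hchain n
  have h8 : (1 + ε) ^ n = (a ^ n) ^ 2 := by
    rw [← ha2, ← pow_mul, ← pow_mul, Nat.mul_comm]
  have ha0 : 0 < a ^ n := by positivity
  have h9 : a ^ n * x u0 ≤ C := by
    rw [h8] at h7
    have h7' : (a ^ n * x u0) * a ^ n ≤ C * a ^ n := by
      have e : (a ^ n * x u0) * a ^ n = (a ^ n) ^ 2 * x u0 := by ring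
      rw [e]
      exact h7
    exact le_of_mul_le_mul_right h7' ha0
  have h10 : a ^ n ≤ C / x u0 := (le_div_iff₀ (hxpos u0)).2 (by linarith [h9])
  linarith [hn, h10]
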